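/- With Ψ as above, Ψ commutes with the first n face maps: for 0 ≤ i ≤ n, Ψ(dⁱφ)(x⁰,…,xⁿ⁺¹) = Ψφ(x⁰,…,xⁱxⁱ⁺¹,…,xⁿ⁺¹) where dⁱφ(h,a⁰,…,aⁿ⁺¹) = φ(h, a⁰,…,aⁱaⁱ⁺¹,…,aⁿ⁺¹) and the x's are elementary tensors aʲ ⊗ hʲ in A ⋊ H. -/

import Mathlib

noncomputable section

open TensorProduct

variable {H A : Type} [Ring H] [HopfAlgebra ℂ H] [Ring A] [Algebra ℂ A]

/-- `sweedler N Δ₁ Δ₂ k g F` is the Sweedler sum `Σ F (g₍₁₎, …, g₍ₖ₊₁₎)`, computed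
from a chosen finite representation `comul g = Σ_{i < N g} Δ₁ g i ⊗ Δ₂ g i` of the
comultiplication. -/
def sweedler (N : H → ℕ) (Δ₁ Δ₂ : H → ℕ → H) :
    (k : ℕ) → H → ((Fin (k+1) → H) → ℂ) → ℂ
  | 0, g, F => F ![g]
  | k+1, g, F => ∑ i ∈ Finset.range (N g),
      sweedler N Δ₁ Δ₂ k (Δ₂ g i) (fun v => F (Fin.cons (Δ₁ g i) v))

/-- The multiplication of the crossed product `A ⋊ H`, as a linear map on
`(A ⊗ H) ⊗ (A ⊗ H)`; on pure tensors it is `(a ⊗ h)(b ⊗ g) = a h₍₁₎(b) ⊗ h₍₂₎ g`. -/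
def cpMul (ρ : H →ₗ[ℂ] A →ₗ[ℂ] A) :
    (A ⊗[ℂ] H) ⊗[ℂ] (A ⊗[ℂ] H) →ₗ[ℂ] A ⊗[ℂ] H :=
  (LinearMap.rTensor H (LinearMap.mul' ℂ A)) ∘ₗ
  (TensorProduct.assoc ℂ A A H).symm.toLinearMap ∘ₗ
  (LinearMap.lTensor A (TensorProduct.map (TensorProduct.lift ρ) (LinearMap.mul' ℂ H))) ∘ₗ
  (LinearMap.lTensor A (TensorProduct.tensorTensorTensorComm ℂ H H A H).toLinearMap) ∘ₗ
  (LinearMap.lTensor A (LinearMap.rTensor (A ⊗[ℂ] H) (Coalgebra.comul (R := ℂ)))) ∘ₗ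
  (TensorProduct.assoc ℂ A H (A ⊗[ℂ] H)).toLinearMap

/-- The tuple obtained from `x` by replacing the pair `(xʲ, xʲ⁺¹)` by the single
entry `y` (used with `y = xʲ xʲ⁺¹` for the `j`-th face map). -/
def faceTup {α : Type} {n : ℕ} (j : Fin (n+1)) (y : α) (x : Fin (n+2) → α) :
    Fin (n+1) → α :=
  fun k => if (k : ℕ) < (j : ℕ) then x k.castSucc else if k = j then y else x k.succ

/-- The `i`-th term of the product `(p.1 ⊗ p.2)(q.1 ⊗ q.2)` in `A ⋊ H`, for the chosen
representation of the comultiplication: `p.1 · (Δ₁ p.2 i)(q.1) ⊗ (Δ₂ p.2 i) q.2`. -/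
def cpPairTerm (Δ₁ Δ₂ : H → ℕ → H) (ρ : H →ₗ[ℂ] A →ₗ[ℂ] A) (p q : A × H) (i : ℕ) :
    A × H :=
  (p.1 * ρ (Δ₁ p.2 i) q.1, Δ₂ p.2 i * q.2)

/-- The Hochschild coboundary of a cochain on the crossed product `A ⋊ H`. -/
def cpb (ρ : H →ₗ[ℂ] A →ₗ[ℂ] A) {n : ℕ} (f : (Fin (n+1) → A ⊗[ℂ] H) → ℂ) :
    (Fin (n+2) → A ⊗[ℂ] H) → ℂ := fun x =>
  (∑ j : Fin (n+1), (-1 : ℂ) ^ (j : ℕ) *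
      f (faceTup j (cpMul ρ (x j.castSucc ⊗ₜ[ℂ] x j.succ)) x))
  + (-1 : ℂ) ^ (n+1) *
      f (fun k => if (k : ℕ) = 0 then cpMul ρ (x (Fin.last (n+1)) ⊗ₜ[ℂ] x 0)
                  else x k.castSucc)

/-- `f` vanishes whenever some argument in position `≥ 1` lies in the subalgebra
`1 ⊗ H` of `A ⋊ H`. -/
def HConstVanish {m : ℕ} (f : (Fin m → A ⊗[ℂ] H) → ℂ) : Prop :=
  ∀ x : Fin m → A ⊗[ℂ] H,
    (∃ j : Fin m, 0 < (j : ℕ) ∧ ∃ h : H, x j = (1 : A) ⊗ₜ[ℂ] h) → f x = 0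

/-- An `H`-constant cochain on `A ⋊ H`: both `f` and `bf` vanish whenever some
argument in position `≥ 1` lies in `1 ⊗ H`. -/
def IsHConstant (ρ : H →ₗ[ℂ] A →ₗ[ℂ] A) {n : ℕ}
    (f : MultilinearMap ℂ (fun _ : Fin (n+1) => A ⊗[ℂ] H) ℂ) : Prop :=
  HConstVanish ⇑f ∧ HConstVanish (cpb ρ ⇑f)

/-- Auxiliary recursion for `Ψ`: processes the pairs `x¹, …, xᵏ`, keeping an
accumulated Hopf algebra element `g`; at each step `Δg = g₍₁₎ ⊗ g₍₂₎` is split, the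
current slot becomes `g₍₁₎(aʲ)` and the accumulator becomes `g₍₂₎ hʲ`. -/
def psiAux (N : H → ℕ) (Δ₁ Δ₂ : H → ℕ → H) (ρ : H →ₗ[ℂ] A →ₗ[ℂ] A) :
    (k : ℕ) → H → (Fin k → A × H) → (H → (Fin k → A) → ℂ) → ℂ
  | 0, g, _, F => F g ![]
  | k+1, g, x, F => ∑ i ∈ Finset.range (N g),
      psiAux N Δ₁ Δ₂ ρ k (Δ₂ g i * (x 0).2) (fun j => x j.succ)
        (fun h v => F h (Fin.cons (ρ (Δ₁ g i) (x 0).1) v))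

/-- The value of `Ψφ` on the elementary tensors `a⁰ ⊗ h⁰, …, aⁿ ⊗ hⁿ`:
`Ψ(φ)(a⁰⊗h⁰, …, aⁿ⊗hⁿ) = φ(h⁰₍ₙ₊₁₎ ⋯ h^{n-1}₍₂₎ hⁿ, a⁰, h⁰₍₁₎(a¹), …,
h⁰₍ₙ₎⋯h^{n-1}₍₁₎(aⁿ))`. -/
def psiV (N : H → ℕ) (Δ₁ Δ₂ : H → ℕ → H) (ρ : H →ₗ[ℂ] A →ₗ[ℂ] A) {n : ℕ}
    (φf : H → (Fin (n+1) → A) → ℂ) (x : Fin (n+1) → A × H) : ℂ :=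
  psiAux N Δ₁ Δ₂ ρ n ((x 0).2) (fun j => x j.succ)
    (fun h v => φf h (Fin.cons (x 0).1 v))

/-- The equivariance condition `φ(S(g₍₂₎) h g₍₁₎, a⁰, …, aⁿ) =
φ(h, g₍₁₎(a⁰), …, g₍ₙ₊₁₎(aⁿ))` for a cochain `φ : H ⊗ A^{⊗(n+1)} → ℂ`. -/
def IsEquivariant (N : H → ℕ) (Δ₁ Δ₂ : H → ℕ → H) (ρ : H →ₗ[ℂ] A →ₗ[ℂ] A) {n : ℕ}
    (φf : H → (Fin (n+1) → A) → ℂ) : Prop :=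
  ∀ (g h : H) (a : Fin (n+1) → A),
    sweedler N Δ₁ Δ₂ 1 g
      (fun ℓ => φf (HopfAlgebra.antipode (R := ℂ) (ℓ 1) * h * ℓ 0) a)
      = sweedler N Δ₁ Δ₂ n g (fun ℓ => φf h (fun j => ρ (ℓ j) (a j)))

/-- The cyclic operator on equivariant cochains:
`t φ(h, a⁰, …, aⁿ) = φ(h₍₂₎, S⁻¹(h₍₁₎)(aⁿ), a⁰, …, aⁿ⁻¹)`. -/
def cycOpEq (N : H → ℕ) (Δ₁ Δ₂ : H → ℕ → H) (ρ : H →ₗ[ℂ] A →ₗ[ℂ] A)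
    (Sinv : H →ₗ[ℂ] H) {n : ℕ} (φf : H → (Fin (n+1) → A) → ℂ) :
    H → (Fin (n+1) → A) → ℂ := fun h a =>
  sweedler N Δ₁ Δ₂ 1 h (fun ℓ =>
    φf (ℓ 1) (Fin.cons (ρ (Sinv (ℓ 0)) (a (Fin.last n))) (fun j : Fin n => a j.castSucc)))

/-- The map `Φ`: `(Φf)(h, a⁰, …, aⁿ) = f(a⁰ ⊗ 1, …, aⁿ⁻¹ ⊗ 1, aⁿ ⊗ h)`. -/
def phiV {n : ℕ} (f : MultilinearMap ℂ (fun _ : Fin (n+1) => A ⊗[ℂ] H) ℂ) :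
    H → (Fin (n+1) → A) → ℂ := fun h a =>
  f (fun i => if i = Fin.last n then a i ⊗ₜ[ℂ] h else a i ⊗ₜ[ℂ] (1 : H))


section Stmt9Aux

variable (N : H → ℕ) (Δ₁ Δ₂ : H → ℕ → H) (ρ : H →ₗ[ℂ] A →ₗ[ℂ] A)

end Stmt9Aux

abbrev ML (B : Type) [Ring B] [Algebra ℂ B] (k : ℕ) : Type :=
  MultilinearMap ℂ (fun _ : Fin k => B) ℂ

section Stmt9Aux

variable (N : H → ℕ) (Δ₁ Δ₂ : H → ℕ → H) (ρ : H →ₗ[ℂ] A →ₗ[ℂ] A)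

lemma psiAux_zero (g : H) (x : Fin 0 → A × H) (F : H → (Fin 0 → A) → ℂ) :
    psiAux N Δ₁ Δ₂ ρ 0 g x F = F g ![] := rfl

lemma psiAux_succ (k : ℕ) (g : H) (x : Fin (k+1) → A × H) (F : H → (Fin (k+1) → A) → ℂ) :
    psiAux N Δ₁ Δ₂ ρ (k+1) g x F = ∑ i ∈ Finset.range (N g),
      psiAux N Δ₁ Δ₂ ρ k (Δ₂ g i * (x 0).2) (fun j => x j.succ)
        (fun h v => F h (Fin.cons (ρ (Δ₁ g i) (x 0).1) v)) := rfl

lemma psiAux_congr {k : ℕ} {g : H} {x : Fin k → A × H} {F G : H → (Fin k → A) → ℂ}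
    (hFG : ∀ h v, F h v = G h v) :
    psiAux N Δ₁ Δ₂ ρ k g x F = psiAux N Δ₁ Δ₂ ρ k g x G := by
  have : F = G := funext fun h => funext fun v => hFG h v
  rw [this]

lemma psiAux_F_add : ∀ (k : ℕ) (g : H) (x : Fin k → A × H) (F G : H → (Fin k → A) → ℂ),
    psiAux N Δ₁ Δ₂ ρ k g x (fun h v => F h v + G h v)
      = psiAux N Δ₁ Δ₂ ρ k g x F + psiAux N Δ₁ Δ₂ ρ k g x G := by
  intro k
  induction k with
  | zero => intro g x F G; rfl
  | succ k IH =>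
      intro g x F G
      simp only [psiAux_succ]
      rw [← Finset.sum_add_distrib]
      exact Finset.sum_congr rfl fun i _ => IH _ _ _ _

lemma psiAux_F_smul : ∀ (k : ℕ) (g : H) (x : Fin k → A × H) (c : ℂ)
    (F : H → (Fin k → A) → ℂ),
    psiAux N Δ₁ Δ₂ ρ k g x (fun h v => c * F h v) = c * psiAux N Δ₁ Δ₂ ρ k g x F := by
  intro k
  induction k with
  | zero => intro g x c F; rfl
  | succ k IH =>
      intro g x c F
      simp only [psiAux_succ]
      rw [Finset.mul_sum]
      exact Finset.sum_congr rfl fun i _ => IH _ _ _ _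

lemma psiAux_F_sum {ι : Type} (S : Finset ι) :
    ∀ (k : ℕ) (g : H) (x : Fin k → A × H) (F : ι → H → (Fin k → A) → ℂ),
    psiAux N Δ₁ Δ₂ ρ k g x (fun h v => ∑ p ∈ S, F p h v)
      = ∑ p ∈ S, psiAux N Δ₁ Δ₂ ρ k g x (F p) := by
  intro k
  induction k with
  | zero => intro g x F; rfl
  | succ k IH =>
      intro g x F
      simp only [psiAux_succ]
      rw [Finset.sum_comm]
      exact Finset.sum_congr rfl fun i _ => IH _ _ _

/-- cochain obtained by freezing the first slot at `b`. -/
def consL {k : ℕ} (b : A) (φ' : H →ₗ[ℂ] ML A (k+1)) : H →ₗ[ℂ] ML A k where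
  toFun h := (φ' h).curryLeft b
  map_add' h h' := by ext v; simp
  map_smul' c h := by ext v; simp

@[simp] lemma consL_apply {k : ℕ} (b : A) (φ' : H →ₗ[ℂ] ML A (k+1)) (h : H)
    (v : Fin k → A) : consL b φ' h v = φ' h (Fin.cons b v) := rfl

/-- evaluation of the first slot as a linear map. -/
def consEval {k : ℕ} (m : ML A (k+1)) (v : Fin k → A) : A →ₗ[ℂ] ℂ where
  toFun b := m (Fin.cons b v)
  map_add' b b' := m.cons_add v b b'
  map_smul' c b := by simpa using m.cons_smul v c b

lemma ML_cons_sum {k : ℕ} (m : ML A (k+1)) {ι : Type} (S : Finset ι) (c : ι → A)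
    (v : Fin k → A) :
    m (Fin.cons (∑ p ∈ S, c p) v) = ∑ p ∈ S, m (Fin.cons (c p) v) :=
  map_sum (consEval m v) c S

end Stmt9Aux

/- faceTup lemmas -/
lemma faceTup_zero {α : Type} {n : ℕ} (y : α) (z : Fin (n+2) → α) :
    faceTup 0 y z = Fin.cons y (fun k => z k.succ.succ) := by
  funext k
  refine Fin.cases ?_ (fun k' => ?_) k
  · simp [faceTup]
  · simp [faceTup, Fin.succ_ne_zero]

lemma faceTup_succ_cons {α : Type} {n : ℕ} (j : Fin (n+1)) (y c : α)
    (w : Fin (n+2) → α) :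
    faceTup j.succ y (Fin.cons c w) = Fin.cons c (faceTup j y w) := by
  funext k
  refine Fin.cases ?_ (fun k' => ?_) k
  · simp [faceTup]
  · simp only [faceTup, Fin.cons_succ]
    by_cases h1 : (k' : ℕ) < (j : ℕ)
    · rw [if_pos (by simp only [Fin.val_succ]; omega :
          ((k'.succ : Fin (n+2)) : ℕ) < ((j.succ : Fin (n+2)) : ℕ)), if_pos h1]
      rw [show (Fin.castSucc (Fin.succ k')) = Fin.succ (Fin.castSucc k') from
        (Fin.succ_castSucc k').symm, Fin.cons_succ]
    · rw [if_neg (by simp only [Fin.val_succ]; omega :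
          ¬ ((k'.succ : Fin (n+2)) : ℕ) < ((j.succ : Fin (n+2)) : ℕ)), if_neg h1]
      by_cases h2 : k' = j
      · rw [if_pos (by rw [h2]), if_pos h2]
      · rw [if_neg (by simpa [Fin.succ_inj] using h2), if_neg h2]


section Stmt9Aux2

variable (N : H → ℕ) (Δ₁ Δ₂ : H → ℕ → H) (ρ : H →ₗ[ℂ] A →ₗ[ℂ] A)

def fhat {k : ℕ} (x : Fin (k+1) → A × H) (φ' : H →ₗ[ℂ] ML A (k+1))
    (hlin : ∀ (x' : Fin k → A × H) (ψ : H →ₗ[ℂ] ML A k),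
      IsLinearMap ℂ (fun g => psiAux N Δ₁ Δ₂ ρ k g x' (fun h v => ψ h v))) :
    H →ₗ[ℂ] H →ₗ[ℂ] ℂ :=
  LinearMap.mk₂ ℂ
    (fun s t => psiAux N Δ₁ Δ₂ ρ k (t * (x 0).2) (fun j => x j.succ)
        (fun h v => consL (ρ s (x 0).1) φ' h v))
    (fun s s' t => by
      rw [← psiAux_F_add]
      refine psiAux_congr N Δ₁ Δ₂ ρ fun h v => ?_
      simp [MultilinearMap.cons_add])
    (fun c s t => by
      rw [smul_eq_mul, ← psiAux_F_smul]
      refine psiAux_congr N Δ₁ Δ₂ ρ fun h v => ?_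
      simp [MultilinearMap.cons_smul, smul_eq_mul])
    (fun s t t' => by
      rw [add_mul]
      exact (hlin _ (consL (ρ s (x 0).1) φ')).map_add _ _)
    (fun c s t => by
      rw [smul_mul_assoc]
      exact (hlin _ (consL (ρ s (x 0).1) φ')).map_smul _ _)

lemma psiAux_succ_eq
    (hrep : ∀ g : H, (Coalgebra.comul (R := ℂ) g : H ⊗[ℂ] H) =
      ∑ i ∈ Finset.range (N g), Δ₁ g i ⊗ₜ[ℂ] Δ₂ g i)
    {k : ℕ} (x : Fin (k+1) → A × H) (φ' : H →ₗ[ℂ] ML A (k+1))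
    (hlin : ∀ (x' : Fin k → A × H) (ψ : H →ₗ[ℂ] ML A k),
      IsLinearMap ℂ (fun g => psiAux N Δ₁ Δ₂ ρ k g x' (fun h v => ψ h v)))
    (g : H) :
    psiAux N Δ₁ Δ₂ ρ (k+1) g x (fun h v => φ' h v)
      = TensorProduct.lift (fhat N Δ₁ Δ₂ ρ x φ' hlin) (Coalgebra.comul (R := ℂ) g) := by
  rw [hrep g, map_sum, psiAux_succ]
  refine Finset.sum_congr rfl fun i _ => ?_
  rw [TensorProduct.lift.tmul]
  rfl

lemma psiAux_linear
    (hrep : ∀ g : H, (Coalgebra.comul (R := ℂ) g : H ⊗[ℂ] H) =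
      ∑ i ∈ Finset.range (N g), Δ₁ g i ⊗ₜ[ℂ] Δ₂ g i) :
    ∀ (k : ℕ) (x : Fin k → A × H) (φ' : H →ₗ[ℂ] ML A k),
      IsLinearMap ℂ (fun g => psiAux N Δ₁ Δ₂ ρ k g x (fun h v => φ' h v)) := by
  intro k
  induction k with
  | zero =>
      intro x φ'
      refine ⟨fun g g' => ?_, fun c g => ?_⟩
      · simp [psiAux_zero, map_add]
      · simp [psiAux_zero, map_smul]
  | succ k IH =>
      intro x φ'
      refine ⟨fun g g' => ?_, fun c g => ?_⟩
      · rw [psiAux_succ_eq N Δ₁ Δ₂ ρ hrep x φ' IH, psiAux_succ_eq N Δ₁ Δ₂ ρ hrep x φ' IH,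
          psiAux_succ_eq N Δ₁ Δ₂ ρ hrep x φ' IH, map_add, map_add]
      · rw [psiAux_succ_eq N Δ₁ Δ₂ ρ hrep x φ' IH, psiAux_succ_eq N Δ₁ Δ₂ ρ hrep x φ' IH,
          map_smul, map_smul]

lemma psiAux_rep
    (hrep : ∀ g : H, (Coalgebra.comul (R := ℂ) g : H ⊗[ℂ] H) =
      ∑ i ∈ Finset.range (N g), Δ₁ g i ⊗ₜ[ℂ] Δ₂ g i)
    {k : ℕ} (x : Fin (k+1) → A × H) (φ' : H →ₗ[ℂ] ML A (k+1)) (g : H)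
    {ι : Type} (S : Finset ι) (s t : ι → H)
    (hst : (Coalgebra.comul (R := ℂ) g : H ⊗[ℂ] H) = ∑ i ∈ S, s i ⊗ₜ[ℂ] t i) :
    psiAux N Δ₁ Δ₂ ρ (k+1) g x (fun h v => φ' h v)
      = ∑ i ∈ S, psiAux N Δ₁ Δ₂ ρ k (t i * (x 0).2) (fun j => x j.succ)
          (fun h v => φ' h (Fin.cons (ρ (s i) (x 0).1) v)) := by
  rw [psiAux_succ_eq N Δ₁ Δ₂ ρ hrep x φ' (psiAux_linear N Δ₁ Δ₂ ρ hrep k), hst, map_sum]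
  exact Finset.sum_congr rfl fun i _ => by rw [TensorProduct.lift.tmul]; rfl

lemma comul_mul_rep
    (hrep : ∀ g : H, (Coalgebra.comul (R := ℂ) g : H ⊗[ℂ] H) =
      ∑ i ∈ Finset.range (N g), Δ₁ g i ⊗ₜ[ℂ] Δ₂ g i)
    (g h : H) :
    (Coalgebra.comul (R := ℂ) (g * h) : H ⊗[ℂ] H)
      = ∑ qr ∈ Finset.range (N g) ×ˢ Finset.range (N h),
          (Δ₁ g qr.1 * Δ₁ h qr.2) ⊗ₜ[ℂ] (Δ₂ g qr.1 * Δ₂ h qr.2) := by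
  rw [Bialgebra.comul_mul, hrep g, hrep h, Finset.sum_mul_sum, Finset.sum_product]
  simp [Algebra.TensorProduct.tmul_mul_tmul]

lemma coassoc_rep
    (hrep : ∀ g : H, (Coalgebra.comul (R := ℂ) g : H ⊗[ℂ] H) =
      ∑ i ∈ Finset.range (N g), Δ₁ g i ⊗ₜ[ℂ] Δ₂ g i)
    (g : H) :
    (∑ m ∈ Finset.range (N g), ∑ q ∈ Finset.range (N (Δ₂ g m)),
        Δ₁ g m ⊗ₜ[ℂ] (Δ₁ (Δ₂ g m) q ⊗ₜ[ℂ] Δ₂ (Δ₂ g m) q) : H ⊗[ℂ] (H ⊗[ℂ] H))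
    = ∑ m ∈ Finset.range (N g), ∑ p ∈ Finset.range (N (Δ₁ g m)),
        Δ₁ (Δ₁ g m) p ⊗ₜ[ℂ] (Δ₂ (Δ₁ g m) p ⊗ₜ[ℂ] Δ₂ g m) := by
  have h1 : (LinearMap.lTensor H (Coalgebra.comul (R := ℂ)))
      ((Coalgebra.comul (R := ℂ) g : H ⊗[ℂ] H))
      = ∑ m ∈ Finset.range (N g), ∑ q ∈ Finset.range (N (Δ₂ g m)),
        Δ₁ g m ⊗ₜ[ℂ] (Δ₁ (Δ₂ g m) q ⊗ₜ[ℂ] Δ₂ (Δ₂ g m) q) := by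
    rw [hrep g, map_sum]
    refine Finset.sum_congr rfl fun m _ => ?_
    rw [LinearMap.lTensor_tmul, hrep (Δ₂ g m), tmul_sum]
  have h2 : (TensorProduct.assoc ℂ H H H).toLinearMap
      ((LinearMap.rTensor H (Coalgebra.comul (R := ℂ)))
        ((Coalgebra.comul (R := ℂ) g : H ⊗[ℂ] H)))
      = ∑ m ∈ Finset.range (N g), ∑ p ∈ Finset.range (N (Δ₁ g m)),
        Δ₁ (Δ₁ g m) p ⊗ₜ[ℂ] (Δ₂ (Δ₁ g m) p ⊗ₜ[ℂ] Δ₂ g m) := by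
    rw [hrep g, map_sum, map_sum]
    refine Finset.sum_congr rfl fun m _ => ?_
    rw [LinearMap.rTensor_tmul, hrep (Δ₁ g m), TensorProduct.sum_tmul, map_sum]
    refine Finset.sum_congr rfl fun p _ => ?_
    exact TensorProduct.assoc_tmul _ _ _
  rw [← h1, ← h2]
  exact (Coalgebra.coassoc_apply g).symm

def triF
    (hrep : ∀ g : H, (Coalgebra.comul (R := ℂ) g : H ⊗[ℂ] H) =
      ∑ i ∈ Finset.range (N g), Δ₁ g i ⊗ₜ[ℂ] Δ₂ g i)
    {k : ℕ} (ψ : H →ₗ[ℂ] ML A (k+1)) (a b : A) (e : H) (x' : Fin k → A × H) :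
    H →ₗ[ℂ] H →ₗ[ℂ] H →ₗ[ℂ] ℂ :=
  LinearMap.mk₂ ℂ
    (fun u v =>
      { toFun := fun w => psiAux N Δ₁ Δ₂ ρ k (w * e) x'
          (fun h vv => consL (ρ u a * ρ v b) ψ h vv)
        map_add' := fun w w' => by
          rw [add_mul]
          exact (psiAux_linear N Δ₁ Δ₂ ρ hrep k x' (consL (ρ u a * ρ v b) ψ)).map_add _ _
        map_smul' := fun c w => by
          rw [RingHom.id_apply, smul_mul_assoc]
          exact (psiAux_linear N Δ₁ Δ₂ ρ hrep k x' (consL (ρ u a * ρ v b) ψ)).map_smul _ _ })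
    (fun u u' v => by
      ext w
      simp only [LinearMap.coe_mk, AddHom.coe_mk, LinearMap.add_apply]
      rw [← psiAux_F_add]
      refine psiAux_congr N Δ₁ Δ₂ ρ fun h vv => ?_
      simp [add_mul, MultilinearMap.cons_add])
    (fun c u v => by
      ext w
      simp only [LinearMap.coe_mk, AddHom.coe_mk, LinearMap.smul_apply, smul_eq_mul]
      rw [← psiAux_F_smul]
      refine psiAux_congr N Δ₁ Δ₂ ρ fun h vv => ?_
      simp [smul_mul_assoc, MultilinearMap.cons_smul, smul_eq_mul])
    (fun u v v' => by
      ext w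
      simp only [LinearMap.coe_mk, AddHom.coe_mk, LinearMap.add_apply]
      rw [← psiAux_F_add]
      refine psiAux_congr N Δ₁ Δ₂ ρ fun h vv => ?_
      simp [mul_add, MultilinearMap.cons_add])
    (fun c u v => by
      ext w
      simp only [LinearMap.coe_mk, AddHom.coe_mk, LinearMap.smul_apply, smul_eq_mul]
      rw [← psiAux_F_smul]
      refine psiAux_congr N Δ₁ Δ₂ ρ fun h vv => ?_
      simp [mul_smul_comm, MultilinearMap.cons_smul, smul_eq_mul])

def triT
    (hrep : ∀ g : H, (Coalgebra.comul (R := ℂ) g : H ⊗[ℂ] H) =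
      ∑ i ∈ Finset.range (N g), Δ₁ g i ⊗ₜ[ℂ] Δ₂ g i)
    {k : ℕ} (ψ : H →ₗ[ℂ] ML A (k+1)) (a b : A) (e : H) (x' : Fin k → A × H) :
    H ⊗[ℂ] (H ⊗[ℂ] H) →ₗ[ℂ] ℂ :=
  TensorProduct.lift ((TensorProduct.lift.equiv (RingHom.id ℂ) H H ℂ).toLinearMap ∘ₗ
    triF N Δ₁ Δ₂ ρ hrep ψ a b e x')

lemma triT_tmul
    (hrep : ∀ g : H, (Coalgebra.comul (R := ℂ) g : H ⊗[ℂ] H) =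
      ∑ i ∈ Finset.range (N g), Δ₁ g i ⊗ₜ[ℂ] Δ₂ g i)
    {k : ℕ} (ψ : H →ₗ[ℂ] ML A (k+1)) (a b : A) (e : H) (x' : Fin k → A × H)
    (u v w : H) :
    triT N Δ₁ Δ₂ ρ hrep ψ a b e x' (u ⊗ₜ[ℂ] (v ⊗ₜ[ℂ] w))
      = psiAux N Δ₁ Δ₂ ρ k (w * e) x' (fun h vv => ψ h (Fin.cons (ρ u a * ρ v b) vv)) := by
  simp only [triT, TensorProduct.lift.tmul, LinearMap.comp_apply, LinearEquiv.coe_coe,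
    TensorProduct.lift.equiv_apply]
  rfl

end Stmt9Aux2


section Stmt9Main

variable (N : H → ℕ) (Δ₁ Δ₂ : H → ℕ → H) (ρ : H →ₗ[ℂ] A →ₗ[ℂ] A)

lemma case_zero (n : ℕ) (φ : H →ₗ[ℂ] ML A (n+1)) (x : Fin (n+2) → A × H) :
    psiV N Δ₁ Δ₂ ρ
        (fun h a => φ h (faceTup 0 (a (Fin.castSucc 0) * a (Fin.succ 0)) a)) x
      = ∑ m ∈ Finset.range (N (x (Fin.castSucc 0)).2),
          psiV N Δ₁ Δ₂ ρ (fun h a => φ h a)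
            (faceTup 0 (cpPairTerm Δ₁ Δ₂ ρ (x (Fin.castSucc 0)) (x (Fin.succ 0)) m) x) := by
  simp only [psiV, Fin.castSucc_zero, Fin.succ_zero_eq_one]
  rw [psiAux_succ]
  refine Finset.sum_congr rfl fun m _ => ?_
  rw [faceTup_zero]
  simp only [Fin.cons_zero, Fin.cons_succ, cpPairTerm]
  refine psiAux_congr N Δ₁ Δ₂ ρ fun h v => ?_
  rw [faceTup_zero]
  simp [cpPairTerm]

end Stmt9Main


lemma faceTup_succ_eq {α : Type} {n : ℕ} (j : Fin (n+1)) (y : α) (z : Fin (n+3) → α) :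
    faceTup j.succ y z = Fin.cons (z 0) (faceTup j y (fun k => z k.succ)) := by
  have h := faceTup_succ_cons j y (z 0) (fun k => z k.succ)
  rw [show (Fin.cons (z 0) (fun k => z k.succ) : Fin (n+3) → α) = z from
    funext fun k => Fin.cases rfl (fun _ => rfl) k] at h
  exact h

section Stmt9Hard

variable (N : H → ℕ) (Δ₁ Δ₂ : H → ℕ → H) (ρ : H →ₗ[ℂ] A →ₗ[ℂ] A)

/-- multiply the first slot on the left by `b`. -/
def lmul0 {k : ℕ} (b : A) (ψ : H →ₗ[ℂ] ML A (k+1)) : H →ₗ[ℂ] ML A (k+1) where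
  toFun h := (ψ h).compLinearMap
    (fun i => if i = 0 then LinearMap.mulLeft ℂ b else LinearMap.id)
  map_add' h h' := by ext v; simp
  map_smul' c h := by ext v; simp

lemma lmul0_apply_cons {k : ℕ} (b : A) (ψ : H →ₗ[ℂ] ML A (k+1)) (h : H) (c : A)
    (v : Fin k → A) :
    lmul0 b ψ h (Fin.cons c v) = ψ h (Fin.cons (b * c) v) := by
  simp only [lmul0, LinearMap.coe_mk, AddHom.coe_mk, MultilinearMap.compLinearMap_apply]
  congr 1
  funext i
  refine Fin.cases ?_ (fun i' => ?_) i
  · simp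
  · simp [Fin.succ_ne_zero]

end Stmt9Hard


section Stmt9Succ

variable (N : H → ℕ) (Δ₁ Δ₂ : H → ℕ → H) (ρ : H →ₗ[ℂ] A →ₗ[ℂ] A)

lemma case_succ (n : ℕ)
    (IH : ∀ (ψ : H →ₗ[ℂ] ML A (n+2)) (i : Fin (n+2)) (y : Fin (n+3) → A × H),
      psiV N Δ₁ Δ₂ ρ (fun h a => ψ h (faceTup i (a i.castSucc * a i.succ) a)) y
        = ∑ m ∈ Finset.range (N (y i.castSucc).2),
            psiV N Δ₁ Δ₂ ρ (fun h a => ψ h a)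
              (faceTup i (cpPairTerm Δ₁ Δ₂ ρ (y i.castSucc) (y i.succ) m) y))
    (φ : H →ₗ[ℂ] ML A (n+3)) (j' : Fin (n+1)) (x : Fin (n+4) → A × H) :
    psiV N Δ₁ Δ₂ ρ (fun h a => φ h (faceTup (Fin.succ j').succ
        (a ((Fin.succ j').succ).castSucc * a ((Fin.succ j').succ).succ) a)) x
      = ∑ m ∈ Finset.range (N (x ((Fin.succ j').succ).castSucc).2),
          psiV N Δ₁ Δ₂ ρ (fun h a => φ h a)
            (faceTup (Fin.succ j').succ
              (cpPairTerm Δ₁ Δ₂ ρ (x ((Fin.succ j').succ).castSucc)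
                (x ((Fin.succ j').succ).succ) m) x) := by
  have step1 : psiV N Δ₁ Δ₂ ρ (fun h a => φ h (faceTup (Fin.succ j').succ
        (a ((Fin.succ j').succ).castSucc * a ((Fin.succ j').succ).succ) a)) x
      = ∑ m ∈ Finset.range (N (x 0).2),
          psiV N Δ₁ Δ₂ ρ
            (fun h a => (consL (x 0).1 φ) h (faceTup (Fin.succ j')
              (a (Fin.succ j').castSucc * a (Fin.succ j').succ) a))
            (Fin.cons (ρ (Δ₁ (x 0).2 m) (x 1).1, Δ₂ (x 0).2 m * (x 1).2)
              (fun k => x k.succ.succ)) := by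
    simp only [psiV]
    rw [psiAux_succ]
    refine Finset.sum_congr rfl fun m hm => ?_
    simp only [Fin.cons_zero, Fin.cons_succ, Fin.succ_zero_eq_one]
    refine psiAux_congr N Δ₁ Δ₂ ρ fun h v => ?_
    rw [faceTup_succ_cons]
    simp only [consL_apply, ← Fin.succ_castSucc, Fin.cons_succ]
  rw [step1]
  have step2 : ∀ m ∈ Finset.range (N (x 0).2),
      psiV N Δ₁ Δ₂ ρ
        (fun h a => (consL (x 0).1 φ) h (faceTup (Fin.succ j')
          (a (Fin.succ j').castSucc * a (Fin.succ j').succ) a))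
        (Fin.cons (ρ (Δ₁ (x 0).2 m) (x 1).1, Δ₂ (x 0).2 m * (x 1).2)
          (fun k => x k.succ.succ))
      = ∑ m₂ ∈ Finset.range (N (x ((Fin.castSucc j').succ.succ)).2),
          psiV N Δ₁ Δ₂ ρ (fun h a => (consL (x 0).1 φ) h a)
            (faceTup (Fin.succ j')
              (cpPairTerm Δ₁ Δ₂ ρ (x ((Fin.castSucc j').succ.succ)) (x j'.succ.succ.succ) m₂)
              (Fin.cons (ρ (Δ₁ (x 0).2 m) (x 1).1, Δ₂ (x 0).2 m * (x 1).2)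
                (fun k => x k.succ.succ))) := by
    intro m hm
    rw [IH (consL (x 0).1 φ) (Fin.succ j')
      (Fin.cons (ρ (Δ₁ (x 0).2 m) (x 1).1, Δ₂ (x 0).2 m * (x 1).2) (fun k => x k.succ.succ))]
    simp only [← Fin.succ_castSucc, Fin.cons_succ]
  rw [Finset.sum_congr rfl step2, Finset.sum_comm]
  have hcs : x (((Fin.succ j').succ).castSucc) = x ((Fin.castSucc j').succ.succ) := by
    rw [← Fin.succ_castSucc, ← Fin.succ_castSucc]
  rw [show (N (x (((Fin.succ j').succ).castSucc)).2) = (N (x ((Fin.castSucc j').succ.succ)).2) by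
    rw [hcs]]
  refine Finset.sum_congr rfl fun m₂ hm₂ => ?_
  -- per-m₂ goal : Σ_m psiV ψ₀ (faceTup (σ j') P ym) = psiV φ (faceTup (σσj') P x)
  rw [show ((Fin.succ j').succ).succ = Fin.succ ((Fin.succ j').succ) from rfl]
  rw [hcs, faceTup_succ_eq, faceTup_succ_eq]
  simp only [psiV, Fin.cons_zero, Fin.cons_succ]
  rw [psiAux_succ]
  refine Finset.sum_congr rfl fun m hm => ?_
  simp only [Fin.cons_zero, Fin.cons_succ, Fin.succ_zero_eq_one]
  congr 1
  · rw [faceTup_succ_eq]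
    simp only [Fin.cons_zero, Fin.cons_succ]

end Stmt9Succ


section Stmt9One

variable (N : H → ℕ) (Δ₁ Δ₂ : H → ℕ → H) (ρ : H →ₗ[ℂ] A →ₗ[ℂ] A)

lemma case_one (n : ℕ)
    (hrep : ∀ g : H, (Coalgebra.comul (R := ℂ) g : H ⊗[ℂ] H) =
      ∑ i ∈ Finset.range (N g), Δ₁ g i ⊗ₜ[ℂ] Δ₂ g i)
    (hρ_mul : ∀ g h : H, ρ (g * h) = ρ g ∘ₗ ρ h)
    (hact_mul : ∀ (h : H) (a b : A),
      ρ h (a * b) = ∑ i ∈ Finset.range (N h), ρ (Δ₁ h i) a * ρ (Δ₂ h i) b)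
    (φ : H →ₗ[ℂ] ML A (n+2)) (x : Fin (n+3) → A × H) :
    psiV N Δ₁ Δ₂ ρ (fun h a => φ h (faceTup (Fin.succ 0)
        (a (Fin.succ (0 : Fin (n+1))).castSucc * a (Fin.succ (0 : Fin (n+1))).succ) a)) x
      = ∑ m ∈ Finset.range (N (x (Fin.succ (0 : Fin (n+1))).castSucc).2),
          psiV N Δ₁ Δ₂ ρ (fun h a => φ h a)
            (faceTup (Fin.succ 0) (cpPairTerm Δ₁ Δ₂ ρ
              (x (Fin.succ (0 : Fin (n+1))).castSucc)
              (x (Fin.succ (0 : Fin (n+1))).succ) m) x) := by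
  have hE : (Fin.succ (0 : Fin (n+1))).castSucc = Fin.succ (0 : Fin (n+2)) := by
    rw [← Fin.succ_castSucc, Fin.castSucc_zero]
  conv_rhs => rw [hE]
  -- Step A : unfold LHS once, cochain in bundled form
  have stepA : psiV N Δ₁ Δ₂ ρ (fun h a => φ h (faceTup (Fin.succ 0)
        (a (Fin.succ (0 : Fin (n+1))).castSucc * a (Fin.succ (0 : Fin (n+1))).succ) a)) x
      = ∑ m ∈ Finset.range (N (x 0).2),
          psiAux N Δ₁ Δ₂ ρ (n+1) (Δ₂ (x 0).2 m * (x (Fin.succ 0)).2) (fun k => x k.succ.succ)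
            (fun h v => lmul0 (ρ (Δ₁ (x 0).2 m) (x (Fin.succ 0)).1) (consL (x 0).1 φ) h v) := by
    simp only [psiV]
    rw [psiAux_succ]
    refine Finset.sum_congr rfl fun m hm => ?_
    refine psiAux_congr N Δ₁ Δ₂ ρ fun h v => ?_
    conv_rhs => rw [← Fin.cons_self_tail v]
    rw [lmul0_apply_cons, consL_apply]
    rw [faceTup_succ_eq, faceTup_zero]
    simp only [← Fin.succ_castSucc, Fin.castSucc_zero, Fin.cons_succ, Fin.cons_zero]
    rfl
  rw [stepA]
  -- Step B : second unfolding, with the product representation of `comul`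
  have stepB : ∀ m ∈ Finset.range (N (x 0).2),
      psiAux N Δ₁ Δ₂ ρ (n+1) (Δ₂ (x 0).2 m * (x (Fin.succ 0)).2) (fun k => x k.succ.succ)
        (fun h v => lmul0 (ρ (Δ₁ (x 0).2 m) (x (Fin.succ 0)).1) (consL (x 0).1 φ) h v)
      = ∑ qr ∈ Finset.range (N (Δ₂ (x 0).2 m)) ×ˢ Finset.range (N ((x (Fin.succ 0)).2)),
          psiAux N Δ₁ Δ₂ ρ n
            ((Δ₂ (Δ₂ (x 0).2 m) qr.1 * Δ₂ ((x (Fin.succ 0)).2) qr.2)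
              * ((fun k => x k.succ.succ) (0 : Fin (n+1))).2)
            (fun j => (fun k => x k.succ.succ) j.succ)
            (fun h v => lmul0 (ρ (Δ₁ (x 0).2 m) (x (Fin.succ 0)).1) (consL (x 0).1 φ) h
              (Fin.cons (ρ (Δ₁ (Δ₂ (x 0).2 m) qr.1 * Δ₁ ((x (Fin.succ 0)).2) qr.2)
                ((fun k => x k.succ.succ) (0 : Fin (n+1))).1) v)) := by
    intro m hm
    exact psiAux_rep N Δ₁ Δ₂ ρ hrep (fun k => x k.succ.succ)
      (lmul0 (ρ (Δ₁ (x 0).2 m) (x (Fin.succ 0)).1) (consL (x 0).1 φ)) _ _ _ _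
      (comul_mul_rep N Δ₁ Δ₂ hrep (Δ₂ (x 0).2 m) ((x (Fin.succ 0)).2))
  rw [Finset.sum_congr rfl stepB]
  -- Step C : identify each term with a value of `triT`
  have stepC : ∀ m ∈ Finset.range (N (x 0).2), ∀ q ∈ Finset.range (N (Δ₂ (x 0).2 m)),
      ∀ r ∈ Finset.range (N ((x (Fin.succ 0)).2)),
      psiAux N Δ₁ Δ₂ ρ n
        ((Δ₂ (Δ₂ (x 0).2 m) q * Δ₂ ((x (Fin.succ 0)).2) r)
          * ((fun k => x k.succ.succ) (0 : Fin (n+1))).2)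
        (fun j => (fun k => x k.succ.succ) j.succ)
        (fun h v => lmul0 (ρ (Δ₁ (x 0).2 m) (x (Fin.succ 0)).1) (consL (x 0).1 φ) h
          (Fin.cons (ρ (Δ₁ (Δ₂ (x 0).2 m) q * Δ₁ ((x (Fin.succ 0)).2) r)
            ((fun k => x k.succ.succ) (0 : Fin (n+1))).1) v))
      = triT N Δ₁ Δ₂ ρ hrep (consL (x 0).1 φ) ((x (Fin.succ 0)).1)
          (ρ (Δ₁ ((x (Fin.succ 0)).2) r) ((x (Fin.succ (Fin.succ (0 : Fin (n+1))))).1))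
          (Δ₂ ((x (Fin.succ 0)).2) r * (x (Fin.succ (Fin.succ (0 : Fin (n+1))))).2)
          (fun k => x k.succ.succ.succ)
          (Δ₁ (x 0).2 m ⊗ₜ[ℂ] (Δ₁ (Δ₂ (x 0).2 m) q ⊗ₜ[ℂ] Δ₂ (Δ₂ (x 0).2 m) q)) := by
    intro m hm q hq r hr
    rw [triT_tmul, ← mul_assoc]
    refine psiAux_congr N Δ₁ Δ₂ ρ fun h v => ?_
    rw [hρ_mul, LinearMap.comp_apply, lmul0_apply_cons]
  -- reorganize the sums on the left
  have stepBC : ∀ m ∈ Finset.range (N (x 0).2),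
      (∑ qr ∈ Finset.range (N (Δ₂ (x 0).2 m)) ×ˢ Finset.range (N ((x (Fin.succ 0)).2)),
          psiAux N Δ₁ Δ₂ ρ n
            ((Δ₂ (Δ₂ (x 0).2 m) qr.1 * Δ₂ ((x (Fin.succ 0)).2) qr.2)
              * ((fun k => x k.succ.succ) (0 : Fin (n+1))).2)
            (fun j => (fun k => x k.succ.succ) j.succ)
            (fun h v => lmul0 (ρ (Δ₁ (x 0).2 m) (x (Fin.succ 0)).1) (consL (x 0).1 φ) h
              (Fin.cons (ρ (Δ₁ (Δ₂ (x 0).2 m) qr.1 * Δ₁ ((x (Fin.succ 0)).2) qr.2)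
                ((fun k => x k.succ.succ) (0 : Fin (n+1))).1) v)))
      = ∑ r ∈ Finset.range (N ((x (Fin.succ 0)).2)),
          ∑ q ∈ Finset.range (N (Δ₂ (x 0).2 m)),
          triT N Δ₁ Δ₂ ρ hrep (consL (x 0).1 φ) ((x (Fin.succ 0)).1)
            (ρ (Δ₁ ((x (Fin.succ 0)).2) r) ((x (Fin.succ (Fin.succ (0 : Fin (n+1))))).1))
            (Δ₂ ((x (Fin.succ 0)).2) r * (x (Fin.succ (Fin.succ (0 : Fin (n+1))))).2)
            (fun k => x k.succ.succ.succ)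
            (Δ₁ (x 0).2 m ⊗ₜ[ℂ] (Δ₁ (Δ₂ (x 0).2 m) q ⊗ₜ[ℂ] Δ₂ (Δ₂ (x 0).2 m) q)) := by
    intro m hm
    rw [Finset.sum_product, Finset.sum_comm]
    exact Finset.sum_congr rfl fun r hr => Finset.sum_congr rfl fun q hq =>
      stepC m hm q hq r hr
  rw [Finset.sum_congr rfl stepBC, Finset.sum_comm]
  -- Step R : reduce the right-hand side, for each r
  have stepR : ∀ r ∈ Finset.range (N ((x (Fin.succ 0)).2)),
      psiV N Δ₁ Δ₂ ρ (fun h a => φ h a)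
        (faceTup (Fin.succ 0) (cpPairTerm Δ₁ Δ₂ ρ
          (x (Fin.succ 0)) (x (Fin.succ (0 : Fin (n+1))).succ) r) x)
      = ∑ m ∈ Finset.range (N (x 0).2), ∑ p ∈ Finset.range (N (Δ₁ (x 0).2 m)),
          triT N Δ₁ Δ₂ ρ hrep (consL (x 0).1 φ) ((x (Fin.succ 0)).1)
            (ρ (Δ₁ ((x (Fin.succ 0)).2) r) ((x (Fin.succ (Fin.succ (0 : Fin (n+1))))).1))
            (Δ₂ ((x (Fin.succ 0)).2) r * (x (Fin.succ (Fin.succ (0 : Fin (n+1))))).2)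
            (fun k => x k.succ.succ.succ)
            (Δ₁ (Δ₁ (x 0).2 m) p ⊗ₜ[ℂ] (Δ₂ (Δ₁ (x 0).2 m) p ⊗ₜ[ℂ] Δ₂ (x 0).2 m)) := by
    intro r hr
    rw [faceTup_succ_eq, faceTup_zero]
    simp only [psiV, Fin.cons_zero, Fin.cons_succ]
    rw [psiAux_succ]
    refine Finset.sum_congr rfl fun m hm => ?_
    simp only [Fin.cons_zero, Fin.cons_succ, cpPairTerm]
    have hpoint : ∀ (h : H) (v : Fin n → A),
        φ h (Fin.cons (x 0).1 (Fin.cons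
          (ρ (Δ₁ (x 0).2 m) ((x (Fin.succ 0)).1
            * ρ (Δ₁ ((x (Fin.succ 0)).2) r) ((x (Fin.succ (Fin.succ (0 : Fin (n+1))))).1))) v))
        = ∑ p ∈ Finset.range (N (Δ₁ (x 0).2 m)),
            consL (x 0).1 φ h (Fin.cons
              (ρ (Δ₁ (Δ₁ (x 0).2 m) p) ((x (Fin.succ 0)).1)
                * ρ (Δ₂ (Δ₁ (x 0).2 m) p)
                  (ρ (Δ₁ ((x (Fin.succ 0)).2) r) ((x (Fin.succ (Fin.succ (0 : Fin (n+1))))).1))) v) := by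
      intro h v
      rw [hact_mul]
      rw [← consL_apply (x 0).1 φ h]
      exact ML_cons_sum (consL (x 0).1 φ h) _ _ v
    rw [psiAux_congr N Δ₁ Δ₂ ρ (fun h v => hpoint h v), psiAux_F_sum]
    refine Finset.sum_congr rfl fun p hp => ?_
    rw [triT_tmul]
  rw [Finset.sum_congr rfl stepR]
  -- final step : coassociativity
  refine Finset.sum_congr rfl fun r hr => ?_
  have hco := congrArg (triT N Δ₁ Δ₂ ρ hrep (consL (x 0).1 φ) ((x (Fin.succ 0)).1)
    (ρ (Δ₁ ((x (Fin.succ 0)).2) r) ((x (Fin.succ (Fin.succ (0 : Fin (n+1))))).1))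
    (Δ₂ ((x (Fin.succ 0)).2) r * (x (Fin.succ (Fin.succ (0 : Fin (n+1))))).2)
    (fun k => x k.succ.succ.succ)) (coassoc_rep N Δ₁ Δ₂ hrep ((x 0).2))
  simpa only [map_sum] using hco

end Stmt9One


section Stmt9Assemble

variable (N : H → ℕ) (Δ₁ Δ₂ : H → ℕ → H) (ρ : H →ₗ[ℂ] A →ₗ[ℂ] A)

lemma main_face
    (hrep : ∀ g : H, (Coalgebra.comul (R := ℂ) g : H ⊗[ℂ] H) =
      ∑ i ∈ Finset.range (N g), Δ₁ g i ⊗ₜ[ℂ] Δ₂ g i)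
    (hρ_mul : ∀ g h : H, ρ (g * h) = ρ g ∘ₗ ρ h)
    (hact_mul : ∀ (h : H) (a b : A),
      ρ h (a * b) = ∑ i ∈ Finset.range (N h), ρ (Δ₁ h i) a * ρ (Δ₂ h i) b) :
    ∀ (n : ℕ) (φ : H →ₗ[ℂ] ML A (n+1)) (i : Fin (n+1)) (x : Fin (n+2) → A × H),
      psiV N Δ₁ Δ₂ ρ (fun h a => φ h (faceTup i (a i.castSucc * a i.succ) a)) x
        = ∑ m ∈ Finset.range (N (x i.castSucc).2),
            psiV N Δ₁ Δ₂ ρ (fun h a => φ h a)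
              (faceTup i (cpPairTerm Δ₁ Δ₂ ρ (x i.castSucc) (x i.succ) m) x) := by
  intro n
  induction n with
  | zero =>
      intro φ i x
      have hi : i = 0 := Fin.fin_one_eq_zero i
      subst hi
      exact case_zero N Δ₁ Δ₂ ρ 0 φ x
  | succ n IH =>
      intro φ i x
      rcases Fin.eq_zero_or_eq_succ i with rfl | ⟨j, rfl⟩
      · exact case_zero N Δ₁ Δ₂ ρ (n+1) φ x
      rcases Fin.eq_zero_or_eq_succ j with rfl | ⟨j', rfl⟩
      · exact case_one N Δ₁ Δ₂ ρ n hrep hρ_mul hact_mul φ x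
      · cases n with
        | zero => exact j'.elim0
        | succ n₁ => exact case_succ N Δ₁ Δ₂ ρ n₁ (fun ψ i y => IH ψ i y) φ j' x

end Stmt9Assemble

/-- `Ψ` commutes with the first faces: for `0 ≤ i ≤ n`,
`Ψ(dⁱφ)(x⁰,…,xⁿ⁺¹) = Ψφ(x⁰,…,xⁱxⁱ⁺¹,…,xⁿ⁺¹)` on elementary tensors
`xʲ = aʲ ⊗ hʲ`, where `dⁱφ(h,a⁰,…,aⁿ⁺¹) = φ(h, a⁰,…,aⁱaⁱ⁺¹,…,aⁿ⁺¹)` (the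
right-hand side is expanded via the chosen representation of `Δ`). -/
theorem statement9 {n : ℕ}
    (N : H → ℕ) (Δ₁ Δ₂ : H → ℕ → H)
    (hrep : ∀ g : H, (Coalgebra.comul (R := ℂ) g : H ⊗[ℂ] H) =
      ∑ i ∈ Finset.range (N g), Δ₁ g i ⊗ₜ[ℂ] Δ₂ g i)
    (ρ : H →ₗ[ℂ] A →ₗ[ℂ] A)
    (hρ_one : ρ 1 = LinearMap.id)
    (hρ_mul : ∀ g h : H, ρ (g * h) = ρ g ∘ₗ ρ h)
    (hact_mul : ∀ (h : H) (a b : A),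
      ρ h (a * b) = ∑ i ∈ Finset.range (N h), ρ (Δ₁ h i) a * ρ (Δ₂ h i) b)
    (hact_one : ∀ h : H, ρ h 1 = (Coalgebra.counit (R := ℂ) h) • (1 : A))
    (φ : H →ₗ[ℂ] MultilinearMap ℂ (fun _ : Fin (n+1) => A) ℂ) :
    ∀ (i : Fin (n+1)) (x : Fin (n+2) → A × H),
      psiV N Δ₁ Δ₂ ρ
        (fun h a => φ h (faceTup i (a i.castSucc * a i.succ) a)) x
      = ∑ m ∈ Finset.range (N (x i.castSucc).2),
          psiV N Δ₁ Δ₂ ρ (fun h a => φ h a)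
            (faceTup i (cpPairTerm Δ₁ Δ₂ ρ (x i.castSucc) (x i.succ) m) x) := by
  intro i x
  exact main_face N Δ₁ Δ₂ ρ hrep hρ_mul hact_mul n φ i x

end
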